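/- Let K be a field and p > 2 a prime number. Let R_{(p,p)} be the set of all natural numbers r such that there exist integers c, d with 0 < c < p, 0 < d < p and c + d ≥ p for which r is the reduction number of the ideal (x^p, y^p, x^c y^d) with respect to J = (x^p, y^p). Then the cardinality of R_{(p,p)} is at most (p+1)/2; equivalently, (p − 1) − |R_{(p,p)}| ≥ (p − 1)/2 − 1. -/
import Mathlib


open MvPolynomial
open Pointwise

/-- The monomial `x^c y^d` in `K[x,y]`. -/
noncomputable def mono (K : Type*) [Field K] (c d : ℕ) : MvPolynomial (Fin 2) K :=
  X 0 ^ c * X 1 ^ d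

/-- The ideal `J = (x^a, y^b)`. -/
noncomputable def Jab (K : Type*) [Field K] (a b : ℕ) : Ideal (MvPolynomial (Fin 2) K) :=
  Ideal.span {mono K a 0, mono K 0 b}

/-- For `A ⊆ {0,…,g}` with `g = gcd(a,b)`, the ideal `I_A` generated by the
monomials `x^(i·(a/g)) y^(b − i·(b/g))` for `i ∈ A`. -/
noncomputable def IA (K : Type*) [Field K] (a b : ℕ) (A : Finset ℕ) :
    Ideal (MvPolynomial (Fin 2) K) :=
  Ideal.span ((fun i : ℕ =>
    mono K (i * (a / Nat.gcd a b)) (b - i * (b / Nat.gcd a b))) '' (A : Set ℕ))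

/-- The reduction number of `I` with respect to `J = (x^a, y^b)`: the least `r ≥ 0`
with `I^(r+1) = J·I^r`. -/
noncomputable def redNum (K : Type*) [Field K] (a b : ℕ)
    (I : Ideal (MvPolynomial (Fin 2) K)) : ℕ :=
  sInf {r : ℕ | I ^ (r + 1) = Jab K a b * I ^ r}

namespace Aux
noncomputable def u (a b : ℕ) : Fin 2 →₀ ℕ := Finsupp.single 0 a + Finsupp.single 1 b
noncomputable def φ (K : Type*) [Field K] (w : Fin 2 →₀ ℕ) : MvPolynomial (Fin 2) K :=
  monomial w 1
variable {K : Type*} [Field K]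
lemma u_add (a b a' b' : ℕ) : u a b + u a' b' = u (a + a') (b + b') := by
  simp [u, Finsupp.single_add]; abel
lemma u_congr {a b a' b' : ℕ} (h1 : a = a') (h2 : b = b') : u a b = u a' b' := by
  rw [h1, h2]
lemma u_apply0 (a b : ℕ) : u a b 0 = a := by simp [u, Finsupp.single_apply]
lemma u_apply1 (a b : ℕ) : u a b 1 = b := by simp [u, Finsupp.single_apply]
lemma u_le {a b a' b' : ℕ} (h : u a b ≤ u a' b') : a ≤ a' ∧ b ≤ b' := by
  constructor
  · have := h 0; rwa [u_apply0, u_apply0] at this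
  · have := h 1; rwa [u_apply1, u_apply1] at this
lemma mono_eq (a b : ℕ) : mono K a b = φ K (u a b) := by
  rw [mono, φ, u, X_pow_eq_monomial, X_pow_eq_monomial, monomial_mul, one_mul]
lemma φ_mul (w w' : Fin 2 →₀ ℕ) : φ K w * φ K w' = φ K (w + w') := by
  rw [φ, φ, φ, monomial_mul, one_mul]
lemma φ_pow (n : ℕ) (w : Fin 2 →₀ ℕ) : φ K w ^ n = φ K (n • w) := by
  rw [φ, φ, monomial_pow, one_pow]
lemma u_smul (n a b : ℕ) : n • u a b = u (n * a) (n * b) := by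
  simp [u, Finsupp.smul_single, smul_add, smul_eq_mul]
lemma u_zero : u 0 0 = 0 := by simp [u]
lemma φ_zero : φ K 0 = 1 := by rw [φ, monomial_zero', C_1]
lemma φ_support (w : Fin 2 →₀ ℕ) : (φ K w).support = {w} := by
  classical
  rw [φ, support_monomial]
  simp

def WI (p c d r : ℕ) : Set (Fin 2 →₀ ℕ) :=
  {w | ∃ i j k, i + j + k = r ∧ w = u (i*p + k*c) (j*p + k*d)}
def VJ (p c d r : ℕ) : Set (Fin 2 →₀ ℕ) :=
  {w | ∃ i j k, i + j + k = r + 1 ∧ 1 ≤ i + j ∧ w = u (i*p + k*c) (j*p + k*d)}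

lemma mem_spanφ {x : MvPolynomial (Fin 2) K} {A : Set (Fin 2 →₀ ℕ)} :
    x ∈ Ideal.span (φ K '' A) ↔ ∀ xi ∈ x.support, ∃ w ∈ A, w ≤ xi :=
  mem_ideal_span_monomial_image

lemma span_φ_mul (A B : Set (Fin 2 →₀ ℕ)) :
    Ideal.span (φ K '' A) * Ideal.span (φ K '' B) = Ideal.span (φ K '' (A + B)) := by
  rw [Ideal.span_mul_span']
  congr 1
  ext f
  constructor
  · rintro ⟨x, ⟨a, ha, rfl⟩, y, ⟨b, hb, rfl⟩, rfl⟩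
    exact ⟨a + b, Set.add_mem_add ha hb, (φ_mul a b).symm⟩
  · rintro ⟨w, ⟨a, ha, b, hb, rfl⟩, rfl⟩
    exact ⟨φ K a, ⟨a, ha, rfl⟩, φ K b, ⟨b, hb, rfl⟩, φ_mul a b⟩

lemma WI_one (p c d : ℕ) : WI p c d 1 = {u p 0, u 0 p, u c d} := by
  ext w
  simp only [WI, Set.mem_setOf_eq, Set.mem_insert_iff, Set.mem_singleton_iff]
  constructor
  · rintro ⟨i, j, k, hsum, rfl⟩
    have : (i = 1 ∧ j = 0 ∧ k = 0) ∨ (i = 0 ∧ j = 1 ∧ k = 0) ∨ (i = 0 ∧ j = 0 ∧ k = 1) := by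
      omega
    rcases this with ⟨rfl, rfl, rfl⟩ | ⟨rfl, rfl, rfl⟩ | ⟨rfl, rfl, rfl⟩
    · left; exact u_congr (by ring) (by ring)
    · right; left; exact u_congr (by ring) (by ring)
    · right; right; exact u_congr (by ring) (by ring)
  · rintro (rfl | rfl | rfl)
    · exact ⟨1, 0, 0, by omega, u_congr (by ring) (by ring)⟩
    · exact ⟨0, 1, 0, by omega, u_congr (by ring) (by ring)⟩
    · exact ⟨0, 0, 1, by omega, u_congr (by ring) (by ring)⟩

lemma WI_add (p c d r : ℕ) : WI p c d r + WI p c d 1 = WI p c d (r + 1) := by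
  ext w
  simp only [Set.mem_add, WI, Set.mem_setOf_eq]
  constructor
  · rintro ⟨w1, ⟨i1, j1, k1, h1, rfl⟩, w2, ⟨i2, j2, k2, h2, rfl⟩, rfl⟩
    exact ⟨i1 + i2, j1 + j2, k1 + k2, by omega,
      by rw [u_add]; exact u_congr (by ring) (by ring)⟩
  · rintro ⟨i, j, k, hsum, rfl⟩
    rcases Nat.lt_or_ge 0 i with hi | hi
    · obtain ⟨i', rfl⟩ : ∃ i', i = i' + 1 := ⟨i - 1, by omega⟩
      refine ⟨u (i'*p + k*c) (j*p + k*d), ⟨i', j, k, by omega, rfl⟩,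
        u (1*p + 0*c) (0*p + 0*d), ⟨1, 0, 0, by omega, rfl⟩, ?_⟩
      rw [u_add]; exact u_congr (by ring) (by ring)
    rcases Nat.lt_or_ge 0 j with hj | hj
    · obtain ⟨j', rfl⟩ : ∃ j', j = j' + 1 := ⟨j - 1, by omega⟩
      refine ⟨u (i*p + k*c) (j'*p + k*d), ⟨i, j', k, by omega, rfl⟩,
        u (0*p + 0*c) (1*p + 0*d), ⟨0, 1, 0, by omega, rfl⟩, ?_⟩
      rw [u_add]; exact u_congr (by ring) (by ring)
    · obtain ⟨k', rfl⟩ : ∃ k', k = k' + 1 := ⟨k - 1, by omega⟩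
      refine ⟨u (i*p + k'*c) (j*p + k'*d), ⟨i, j, k', by omega, rfl⟩,
        u (0*p + 1*c) (0*p + 1*d), ⟨0, 0, 1, by omega, rfl⟩, ?_⟩
      rw [u_add]; exact u_congr (by ring) (by ring)

lemma WJ_add (p c d r : ℕ) :
    ({u p 0, u 0 p} : Set (Fin 2 →₀ ℕ)) + WI p c d r = VJ p c d r := by
  ext w
  simp only [Set.mem_add, WI, VJ, Set.mem_setOf_eq, Set.mem_insert_iff, Set.mem_singleton_iff]
  constructor
  · rintro ⟨w1, (rfl | rfl), w2, ⟨i, j, k, hsum, rfl⟩, rfl⟩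
    · exact ⟨i+1, j, k, by omega, by omega,
        by rw [u_add]; exact u_congr (by ring) (by ring)⟩
    · exact ⟨i, j+1, k, by omega, by omega,
        by rw [u_add]; exact u_congr (by ring) (by ring)⟩
  · rintro ⟨i, j, k, hsum, hij, rfl⟩
    rcases Nat.lt_or_ge 0 i with hi | hi
    · obtain ⟨i', rfl⟩ : ∃ i', i = i' + 1 := ⟨i - 1, by omega⟩
      refine ⟨u p 0, Or.inl rfl, u (i'*p + k*c) (j*p + k*d), ⟨i', j, k, by omega, rfl⟩, ?_⟩
      rw [u_add]; exact u_congr (by ring) (by ring)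
    · obtain ⟨j', rfl⟩ : ∃ j', j = j' + 1 := ⟨j - 1, by omega⟩
      refine ⟨u 0 p, Or.inr rfl, u (i*p + k*c) (j'*p + k*d), ⟨i, j', k, by omega, rfl⟩, ?_⟩
      rw [u_add]; exact u_congr (by ring) (by ring)

variable (K) in
noncomputable def Idl (p c d : ℕ) : Ideal (MvPolynomial (Fin 2) K) :=
  Ideal.span {mono K p 0, mono K 0 p, mono K c d}
variable (K) in
noncomputable def Jdl (p : ℕ) : Ideal (MvPolynomial (Fin 2) K) :=
  Ideal.span {mono K p 0, mono K 0 p}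

lemma I_one (p c d : ℕ) : Idl K p c d = Ideal.span (φ K '' WI p c d 1) := by
  rw [Idl, WI_one, Set.image_insert_eq, Set.image_insert_eq, Set.image_singleton,
    mono_eq, mono_eq, mono_eq]

lemma J_eq (p : ℕ) :
    Jdl K p = Ideal.span (φ K '' ({u p 0, u 0 p} : Set (Fin 2 →₀ ℕ))) := by
  rw [Jdl, Set.image_insert_eq, Set.image_singleton, mono_eq, mono_eq]

lemma Ipow (p c d r : ℕ) : Idl K p c d ^ r = Ideal.span (φ K '' WI p c d r) := by
  induction r with
  | zero =>
    rw [pow_zero]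
    have : WI p c d 0 = {0} := by
      ext w
      simp only [WI, Set.mem_setOf_eq, Set.mem_singleton_iff]
      constructor
      · rintro ⟨i, j, k, hsum, rfl⟩
        have hi : i = 0 := by omega
        have hj : j = 0 := by omega
        have hk : k = 0 := by omega
        subst hi hj hk
        rw [← u_zero]; exact u_congr (by ring) (by ring)
      · rintro rfl; exact ⟨0, 0, 0, by omega, by rw [← u_zero]; exact u_congr (by ring) (by ring)⟩
    rw [this, Set.image_singleton, φ_zero, Ideal.span_singleton_one, Ideal.one_eq_top]
  | succ r ih =>
    rw [pow_succ, ih, I_one, span_φ_mul, WI_add]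

lemma JIpow (p c d r : ℕ) :
    Jdl K p * Idl K p c d ^ r = Ideal.span (φ K '' VJ p c d r) := by
  rw [J_eq p, Ipow, span_φ_mul, WJ_add]

lemma J_le_I (p c d : ℕ) : Jdl K p ≤ Idl K p c d := by
  apply Ideal.span_mono
  intro x hx
  simp only [Set.mem_insert_iff, Set.mem_singleton_iff] at hx ⊢
  tauto

lemma eq_of_witness (p c d s i j : ℕ) (hs : 1 ≤ s) (hij : i + j = s)
    (hi : i*p ≤ s*c) (hj : j*p ≤ s*d) :
    Idl K p c d ^ s = Jdl K p * Idl K p c d ^ (s - 1) := by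
  apply le_antisymm
  · rw [Ipow, JIpow, Ideal.span_le]
    rintro f ⟨w, ⟨i', j', k', hsum, rfl⟩, rfl⟩
    rcases Nat.lt_or_ge 0 (i' + j') with hij' | hij'
    · exact Ideal.subset_span ⟨_, ⟨i', j', k', by omega, hij', rfl⟩, rfl⟩
    · have hk : k' = s := by omega
      have hi0 : i' = 0 := by omega
      have hj0 : j' = 0 := by omega
      subst hi0 hj0
      rw [← hk]
      have h1 : φ K (u p 0) ∈ Jdl K p := by
        rw [Jdl, ← mono_eq]; exact Ideal.subset_span (by simp)
      have h2 : φ K (u 0 p) ∈ Jdl K p := by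
        rw [Jdl, ← mono_eq]; exact Ideal.subset_span (by simp)
      have hJs : (φ K (u p 0))^i * (φ K (u 0 p))^j ∈ Jdl K p ^ k' := by
        have := Ideal.mul_mem_mul (Ideal.pow_mem_pow h1 i) (Ideal.pow_mem_pow h2 j)
        rwa [← pow_add, hij, ← hk] at this
      have hle : Jdl K p ^ k' ≤ Jdl K p * Idl K p c d ^ (k' - 1) := by
        have hss : Jdl K p ^ k' = Jdl K p * Jdl K p ^ (k'-1) := by
          rw [← pow_succ']
          congr 1
          omega
        rw [hss]
        exact Ideal.mul_mono_right (Ideal.pow_right_mono (J_le_I p c d) _)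
      rw [JIpow] at hle
      have key : φ K (u (0*p + k'*c) (0*p + k'*d))
          = φ K (u (k'*c - i*p) (k'*d - j*p)) * ((φ K (u p 0))^i * (φ K (u 0 p))^j) := by
        simp only [φ_pow, u_smul, φ_mul, u_add]
        refine congrArg _ (u_congr ?_ ?_)
        · have : i * p ≤ k' * c := by rw [hk]; exact hi
          omega
        · have : j * p ≤ k' * d := by rw [hk]; exact hj
          omega
      rw [key]
      exact Ideal.mul_mem_left _ _ (hle hJs)
  · have hss : Idl K p c d ^ s = Idl K p c d * Idl K p c d ^ (s-1) := by
      rw [← pow_succ']; congr 1; omega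
    rw [hss]
    exact Ideal.mul_mono_left (J_le_I p c d)

lemma pow_not_mem (p c d r : ℕ) (hp : p.Prime) (hc : 0 < c) (hcp : c < p)
    (hcd : c + d = p) (hr : r + 1 ≤ p - 1) :
    (mono K c d)^(r+1) ∉ Jdl K p * Idl K p c d ^ r := by
  rw [JIpow, mono_eq, φ_pow, u_smul, mem_spanφ]
  intro h
  obtain ⟨w, ⟨i, j, k, hsum, hij, rfl⟩, hle⟩ :=
    h (u ((r+1)*c) ((r+1)*d)) (by rw [φ_support]; exact Finset.mem_singleton_self _)
  obtain ⟨h0, h1⟩ := u_le hle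
  have f1 : (r+1)*c = (i+j)*c + k*c := by rw [← hsum]; ring
  have f2 : (r+1)*d = (i+j)*d + k*d := by rw [← hsum]; ring
  have f3 : (i+j)*p = (i+j)*c + (i+j)*d := by rw [← mul_add, hcd]
  have f4 : (i+j)*p = i*p + j*p := by ring
  have heq : i*p = (i+j)*c := by omega
  have hdvd : p ∣ (i+j)*c := by rw [← heq]; exact dvd_mul_left p i
  rcases (Nat.Prime.dvd_mul hp).1 hdvd with hh | hh
  · have := Nat.le_of_dvd (by omega) hh
    omega
  · have := Nat.le_of_dvd hc hh
    omega

lemma mono_notMem_J (p c d : ℕ) (hcp : c < p) (hdp : d < p) :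
    mono K c d ∉ Jdl K p := by
  rw [J_eq, mono_eq, mem_spanφ]
  intro h
  obtain ⟨w, hw, hle⟩ := h (u c d) (by rw [φ_support]; exact Finset.mem_singleton_self _)
  rcases hw with rfl | rfl
  · exact absurd (u_le hle).1 (by omega)
  · exact absurd (u_le hle).2 (by omega)

lemma key_nt (p c : ℕ) (hp : p.Prime) (hp2 : 2 < p) (hc : 0 < c) (hcp : c < p) :
    ∃ s, 1 ≤ s ∧ s ≤ (p+1)/2 ∧ (s*c) % p ≤ s := by
  obtain ⟨t, ht⟩ : ∃ t, p = 2*t+1 := by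
    rcases Nat.Prime.odd_of_ne_two hp (by omega) with ⟨k, hk⟩
    exact ⟨k, by omega⟩
  have ht1 : 1 ≤ t := by omega
  have hp0 : 0 < p := by omega
  have hnd : ¬ p ∣ c := fun h => by have := Nat.le_of_dvd hc h; omega
  have ha : ¬ p ∣ t*c := by
    intro h
    rcases (Nat.Prime.dvd_mul hp).1 h with h | h
    · have := Nat.le_of_dvd (by omega) h; omega
    · exact hnd h
  have hb : ¬ p ∣ (t+1)*c := by
    intro h
    rcases (Nat.Prime.dvd_mul hp).1 h with h | h
    · have := Nat.le_of_dvd (by omega) h; omega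
    · exact hnd h
  have ha' : (t*c) % p ≠ 0 := fun h => ha (Nat.dvd_of_mod_eq_zero h)
  have hb' : ((t+1)*c) % p ≠ 0 := fun h => hb (Nat.dvd_of_mod_eq_zero h)
  have hal : (t*c) % p < p := Nat.mod_lt _ hp0
  have hbl : ((t+1)*c) % p < p := Nat.mod_lt _ hp0
  have hsum : ((t*c) % p + ((t+1)*c) % p) % p = 0 := by
    rw [← Nat.add_mod]
    have h5 : t*c + (t+1)*c = c*p := by rw [ht]; ring
    rw [h5, Nat.mul_mod_left]
  obtain ⟨q, hq⟩ := Nat.dvd_of_mod_eq_zero hsum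
  have hqlt : q < 2 := by
    refine Nat.lt_of_mul_lt_mul_left (a := p) ?_
    omega
  have hq0 : q ≠ 0 := by
    rintro rfl
    rw [mul_zero] at hq
    omega
  have hq1 : q = 1 := by omega
  rw [hq1, mul_one] at hq
  rcases le_or_gt ((t*c) % p) t with h | h
  · exact ⟨t, ht1, by omega, h⟩
  · exact ⟨t+1, by omega, by omega, by omega⟩

lemma witness (p c d s : ℕ) (hp0 : 0 < p) (hcp : c < p) (hcd : p + 1 ≤ c + d)
    (hmod : (s*c) % p ≤ s) :
    ∃ i j, i + j = s ∧ i*p ≤ s*c ∧ j*p ≤ s*d := by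
  have hi : s*c/p ≤ s := by
    have h1 : s*c/p ≤ s*p/p := Nat.div_le_div_right (Nat.mul_le_mul_left s (le_of_lt hcp))
    rwa [Nat.mul_div_cancel s hp0] at h1
  refine ⟨s*c/p, s - s*c/p, by omega, Nat.div_mul_le_self _ _, ?_⟩
  have h1 := Nat.div_add_mod (s*c) p
  have h2 : p * (s*c/p) = (s*c/p) * p := mul_comm _ _
  have h3 : s*(p+1) ≤ s*(c+d) := Nat.mul_le_mul_left s hcd
  have h4 : s*(p+1) = s*p + s := by ring
  have h5 : s*(c+d) = s*c + s*d := by ring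
  have h6 : (s - s*c/p)*p = s*p - (s*c/p)*p := Nat.sub_mul _ _ _
  omega

end Aux

open Aux

theorem stmt11 (K : Type*) [Field K] (p : ℕ) (hp : p.Prime) (hp2 : 2 < p) :
    {r : ℕ | ∃ c d : ℕ, 0 < c ∧ c < p ∧ 0 < d ∧ d < p ∧ p ≤ c + d ∧
        r = redNum K p p (Ideal.span {mono K p 0, mono K 0 p, mono K c d})}.ncard
      ≤ (p + 1) / 2 := by
  classical
  have hsub : {r : ℕ | ∃ c d : ℕ, 0 < c ∧ c < p ∧ 0 < d ∧ d < p ∧ p ≤ c + d ∧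
      r = redNum K p p (Ideal.span {mono K p 0, mono K 0 p, mono K c d})}
      ⊆ ↑(Finset.Icc 1 ((p-1)/2) ∪ {p-1}) := by
    rintro r ⟨c, d, hc0, hcp, hd0, hdp, hcd, rfl⟩
    have hIeq : Ideal.span {mono K p 0, mono K 0 p, mono K c d} = Idl K p c d := rfl
    rw [hIeq]
    set S : Set ℕ := {n : ℕ | Idl K p c d ^ (n+1) = Jab K p p * Idl K p c d ^ n} with hS
    have hredNum : redNum K p p (Idl K p c d) = sInf S := rfl
    have hJab : Jab K p p = Jdl K p := rfl
    have hmemI : mono K c d ∈ Idl K p c d := Ideal.subset_span (by simp)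
    have h0S : 0 ∉ S := by
      intro h0
      simp only [hS, Set.mem_setOf_eq, zero_add, pow_one, pow_zero, mul_one] at h0
      rw [h0, hJab] at hmemI
      exact mono_notMem_J p c d hcp hdp hmemI
    simp only [Finset.coe_union, Set.mem_union, Finset.coe_Icc, Set.mem_Icc,
      Finset.coe_singleton, Set.mem_singleton_iff]
    rcases eq_or_lt_of_le hcd with he | he
    · -- c + d = p
      have hup : (p-1) ∈ S := by
        have heq := eq_of_witness (K := K) p c d p c d (by omega) (by omega)
          (by rw [mul_comm]) (by rw [mul_comm])
        simp only [hS, Set.mem_setOf_eq]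
        rw [hJab]
        have hps : p - 1 + 1 = p := by omega
        rw [hps, heq]
      have hlow : ∀ n ∈ S, p - 1 ≤ n := by
        intro n hn
        by_contra hlt
        simp only [hS, Set.mem_setOf_eq] at hn
        have hmem : (mono K c d)^(n+1) ∈ Idl K p c d ^ (n+1) :=
          Ideal.pow_mem_pow hmemI _
        rw [hn, hJab] at hmem
        exact pow_not_mem p c d n hp hc0 hcp (by omega) (by omega) hmem
      have hval : sInf S = p - 1 :=
        le_antisymm (Nat.sInf_le hup) (hlow _ (Nat.sInf_mem ⟨_, hup⟩))
      rw [hredNum, hval]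
      right; rfl
    · -- p < c + d
      obtain ⟨s, hs1, hs2, hs3⟩ := key_nt p c hp hp2 hc0 hcp
      obtain ⟨i, j, hij, hi, hj⟩ := witness p c d s (by omega) hcp (by omega) hs3
      have heq := eq_of_witness (K := K) p c d s i j hs1 hij hi hj
      have hmemS : s - 1 ∈ S := by
        simp only [hS, Set.mem_setOf_eq]
        rw [hJab]
        have hss : s - 1 + 1 = s := by omega
        rw [hss, heq]
      have hle : sInf S ≤ s - 1 := Nat.sInf_le hmemS
      have hmem : sInf S ∈ S := Nat.sInf_mem ⟨_, hmemS⟩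
      have hpos : 1 ≤ sInf S := by
        rcases Nat.eq_zero_or_pos (sInf S) with h | h
        · rw [h] at hmem; exact absurd hmem h0S
        · exact h
      rw [hredNum]
      left
      exact ⟨hpos, by omega⟩
  have hcard := Set.ncard_le_ncard hsub (Finset.finite_toSet _)
  rw [Set.ncard_coe_finset] at hcard
  have hcard2 := Finset.card_union_le (Finset.Icc 1 ((p-1)/2)) ({p-1} : Finset ℕ)
  rw [Nat.card_Icc, Finset.card_singleton] at hcard2
  omega
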